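/- Assume the Bethe equations hold with s_j = d_j/2 where d_1, …, d_n are natural numbers. For each fixed index i, define H_i(y) = (∏_{j=1}^n (y − ε_j)^{d_j}) · exp(−(2/(ħ g²))(y² − ω y)) / ∏_{k≠i} (y − μ_k)². Then H_i is complex differentiable at μ_i and H_i′(μ_i) = 0; i.e. the double pole of the integrand ∏_j (y − ε_j)^{2 s_j} e^{−(2/(ħ g²))(y² − ω y)} / ∏_m (y − μ_m)² at y = μ_i has vanishing residue (trivial monodromy of the second solution). -/

import Mathlib

open BigOperators Finset

/-- trivial monodromy: under the Bethe equations with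
`s_j = d_j/2`, the integrand of the second solution, with the double pole at
`μ_i` removed, has vanishing derivative at `μ_i`; i.e. the residue of the
double pole vanishes. -/
theorem trivial_monodromy_residue
    (n M : ℕ) (hbar g ω : ℂ) (hhbar : hbar ≠ 0) (hg : g ≠ 0)
    (ε : Fin n → ℂ) (hε : Function.Injective ε)
    (d : Fin n → ℕ) (s : Fin n → ℂ) (hs : ∀ j, s j = (d j : ℂ) / 2)
    (μ : Fin M → ℂ) (hμ : Function.Injective μ)
    (hμε : ∀ i j, μ i ≠ ε j)
    (a : ℂ → ℂ)
    (ha : ∀ z, a z = (2 * z - ω) / g ^ 2 - ∑ j, hbar * s j / (z - ε j))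
    (bethe : ∀ i, a (μ i) + ∑ k ∈ Finset.univ.erase i, hbar / (μ i - μ k) = 0)
    (i : Fin M) :
    HasDerivAt (fun y : ℂ =>
        (∏ j, (y - ε j) ^ (d j)) * Complex.exp (-(2 / (hbar * g ^ 2)) * (y ^ 2 - ω * y))
          / ∏ k ∈ Finset.univ.erase i, (y - μ k) ^ 2)
      0 (μ i) := by
  set c := μ i with hc
  have hne1 : ∀ j, c - ε j ≠ 0 := fun j => sub_ne_zero.mpr (hμε i j)
  have hne2 : ∀ k ∈ Finset.univ.erase i, c - μ k ≠ 0 := by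
    intro k hk
    exact sub_ne_zero.mpr fun h => (Finset.mem_erase.mp hk).1 (hμ h.symm)
  set Pc : ℂ := ∏ j, (c - ε j) ^ (d j) with hPc
  set Qc : ℂ := ∏ k ∈ Finset.univ.erase i, (c - μ k) ^ 2 with hQc
  set Ec : ℂ := Complex.exp (-(2 / (hbar * g ^ 2)) * (c ^ 2 - ω * c)) with hEc
  set A : ℂ := ∑ j, (d j : ℂ) / (c - ε j) with hA
  set B : ℂ := ∑ k ∈ Finset.univ.erase i, 2 / (c - μ k) with hB
  set φ' : ℂ := -(2 / (hbar * g ^ 2)) * (2 * c - ω) with hφ'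
  have hQcne : Qc ≠ 0 := Finset.prod_ne_zero_iff.mpr fun k hk => pow_ne_zero _ (hne2 k hk)
  -- derivative of P
  have hP : HasDerivAt (fun y : ℂ => ∏ j, (y - ε j) ^ (d j)) (Pc * A) c := by
    have h := HasDerivAt.fun_finsetProd
      (u := Finset.univ) (f := fun j (y : ℂ) => (y - ε j) ^ (d j))
      (f' := fun j => (d j : ℂ) * (c - ε j) ^ (d j - 1)) (x := c)
      (fun j _ => by simpa using ((hasDerivAt_id c).sub_const (ε j)).fun_pow (d j))
    refine h.congr_deriv (Eq.symm ?_)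
    rw [hPc, hA, Finset.mul_sum]
    refine Finset.sum_congr rfl fun j _ => ?_
    rcases Nat.eq_zero_or_pos (d j) with h0 | h0
    · simp [h0]
    · have hpow : (c - ε j) ^ (d j) = (c - ε j) ^ (d j - 1) * (c - ε j) := by
        rw [← pow_succ, Nat.sub_add_cancel h0]
      rw [smul_eq_mul, ← Finset.prod_erase_mul _ _ (Finset.mem_univ j), hpow]
      field_simp [hne1 j]
  -- derivative of exp part
  have hE : HasDerivAt (fun y : ℂ => Complex.exp (-(2 / (hbar * g ^ 2)) * (y ^ 2 - ω * y)))
      (Ec * φ') c := by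
    have h1 : HasDerivAt (fun y : ℂ => y ^ 2 - ω * y) (2 * c - ω) c := by
      have := (hasDerivAt_pow 2 c).sub ((hasDerivAt_id c).const_mul ω)
      refine this.congr_deriv (Eq.symm ?_)
      · norm_num
    have hpoly : HasDerivAt (fun y : ℂ => -(2 / (hbar * g ^ 2)) * (y ^ 2 - ω * y)) φ' c := by
      simpa [hφ'] using h1.const_mul (-(2 / (hbar * g ^ 2)))
    simpa [hEc, mul_comm] using hpoly.cexp
  -- derivative of Q
  have hQ : HasDerivAt (fun y : ℂ => ∏ k ∈ Finset.univ.erase i, (y - μ k) ^ 2) (Qc * B) c := by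
    have h := HasDerivAt.fun_finsetProd
      (u := Finset.univ.erase i) (f := fun k (y : ℂ) => (y - μ k) ^ 2)
      (f' := fun k => 2 * (c - μ k)) (x := c)
      (fun k _ => by simpa using ((hasDerivAt_id c).sub_const (μ k)).fun_pow 2)
    refine h.congr_deriv (Eq.symm ?_)
    rw [hQc, hB, Finset.mul_sum]
    refine Finset.sum_congr rfl fun k hk => ?_
    rw [smul_eq_mul, ← Finset.prod_erase_mul _ _ hk]
    field_simp [hne2 k hk]
  -- Bethe relation
  have key : A + φ' - B = 0 := by
    have h := bethe i
    rw [ha, ← hc] at h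
    have hAS : hbar * A = 2 * ∑ j, hbar * s j / (c - ε j) := by
      rw [hA, Finset.mul_sum, Finset.mul_sum]
      refine Finset.sum_congr rfl fun j _ => ?_
      rw [hs j]; ring
    have hBS : hbar * B = 2 * ∑ k ∈ Finset.univ.erase i, hbar / (c - μ k) := by
      rw [hB, Finset.mul_sum, Finset.mul_sum]
      refine Finset.sum_congr rfl fun k _ => ?_
      ring
    have hφ2 : hbar * φ' = -(2 / g ^ 2) * (2 * c - ω) := by
      rw [hφ']; field_simp
    have h2 : hbar * (A + φ' - B) = 0 := by
      rw [mul_sub, mul_add, hAS, hBS, hφ2]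
      linear_combination (-2 : ℂ) * h
    exact (mul_eq_zero.mp h2).resolve_left hhbar
  -- assemble
  have hF := (hP.fun_mul hE).fun_div hQ hQcne
  refine hF.congr_deriv (Eq.symm ?_)
  rw [← hEc, ← hPc, ← hQc, eq_comm, div_eq_zero_iff]
  left
  linear_combination (Pc * Ec * Qc) * key
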